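/- For a weight structure w on a triangulated category C, the class C_{w≤0} equals the left orthogonal of C_{w≥1}, that is, C_{w≤0} = {M : Hom(M, N) = 0 for all N ∈ C_{w≥0}[1]}. -/

import Mathlib

open CategoryTheory CategoryTheory.Limits CategoryTheory.Pretriangulated

universe v u u'

variable (C : Type u) [Category.{v} C] [HasZeroObject C] [HasShift C ℤ]
  [Preadditive C] [∀ n : ℤ, (shiftFunctor C n).Additive] [Pretriangulated C]

/-- A weight structure on a triangulated category `C`:
a pair of Karoubi-closed classes `le = C_{w≤0}` and `ge = C_{w≥0}` satisfying
semi-invariance with respect to translations, orthogonality and the existence of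
weight decompositions. -/
structure WeightStructure where
  /-- the class `C_{w≤0}` -/
  le : Set C
  /-- the class `C_{w≥0}` -/
  ge : Set C
  /-- `C_{w≤0}` is Karoubi-closed (contains all retracts of its elements) -/
  le_retract : ∀ ⦃M N : C⦄, N ∈ le → ∀ (i : M ⟶ N) (r : N ⟶ M), i ≫ r = 𝟙 M → M ∈ le
  /-- `C_{w≥0}` is Karoubi-closed -/
  ge_retract : ∀ ⦃M N : C⦄, N ∈ ge → ∀ (i : M ⟶ N) (r : N ⟶ M), i ≫ r = 𝟙 M → M ∈ ge
  /-- `C_{w≤0} ⊆ C_{w≤0}[1]`, i.e. `M ∈ C_{w≤0} → M[-1] ∈ C_{w≤0}` -/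
  le_shift : ∀ ⦃M : C⦄, M ∈ le → M⟦(-1 : ℤ)⟧ ∈ le
  /-- `C_{w≥0}[1] ⊆ C_{w≥0}` -/
  ge_shift : ∀ ⦃M : C⦄, M ∈ ge → M⟦(1 : ℤ)⟧ ∈ ge
  /-- orthogonality: `C_{w≤0} ⊥ C_{w≥0}[1]` -/
  orth : ∀ ⦃M N : C⦄, M ∈ le → N ∈ ge → ∀ f : M ⟶ N⟦(1 : ℤ)⟧, f = 0
  /-- weight decompositions -/
  decomp : ∀ M : C, ∃ (L R : C) (f : L ⟶ M) (g : M ⟶ R) (h : R ⟶ L⟦(1 : ℤ)⟧),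
    Triangle.mk f g h ∈ (distTriang C) ∧ L ∈ le ∧ R⟦(-1 : ℤ)⟧ ∈ ge

/-- For a weight structure `w` on `C`, the class `C_{w≤0}` equals the left orthogonal
of `C_{w≥1} = C_{w≥0}[1]`: `C_{w≤0} = {M | Hom(M, N[1]) = 0 for all N ∈ C_{w≥0}}`. -/
theorem le_eq_left_orthogonal (w : WeightStructure C) :
    w.le = {M : C | ∀ N ∈ w.ge, ∀ f : M ⟶ N⟦(1 : ℤ)⟧, f = 0} := by
  ext M
  constructor
  · intro hM N hN f
    exact w.orth hM hN f
  · intro hM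
    obtain ⟨L, R, f, g, h, hT, hL, hR⟩ := w.decomp M
    have hg : g = 0 := by
      have := hM _ hR (g ≫ (shiftNegShift R (1 : ℤ)).inv)
      calc g = (g ≫ (shiftNegShift R (1 : ℤ)).inv) ≫ (shiftNegShift R (1 : ℤ)).hom := by
              rw [Category.assoc, Iso.inv_hom_id, Category.comp_id]
        _ = 0 := by rw [this, zero_comp]
    obtain ⟨s, hs⟩ := Triangle.coyoneda_exact₂ _ hT (𝟙 M) (by change 𝟙 M ≫ g = 0; rw [Category.id_comp, hg])
    exact w.le_retract hL s f hs.symm
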